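/- If a nonzero right R-module M has couniserial dimension at most ω (the first infinite ordinal), then M has an indecomposable decomposition, i.e., M is a direct sum of indecomposable submodules. -/

import Mathlib

universe u v w

/-- A module is *uniform* if it is nonzero and any two nonzero submodules intersect
nontrivially. -/
def IsUniformModule (R : Type u) [Ring R] (M : Type v) [AddCommGroup M] [Module R M] : Prop :=
  Nontrivial M ∧ ∀ N₁ N₂ : Submodule R M, N₁ ≠ ⊥ → N₂ ≠ ⊥ → N₁ ⊓ N₂ ≠ ⊥

/-- The classes `ζ_α`, defined by transfinite induction: `ζ_1` is the class of uniform
modules, and for `α > 1`, `M ∈ ζ_α` iff every nonzero submodule `N` of `M` with `N ≇ M`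
lies in `ζ_β` for some `β < α`. -/
def ModuleZeta (R : Type u) [Ring R] (α : Ordinal.{v}) (M : Type v) [AddCommGroup M]
    [Module R M] : Prop :=
  (α = 1 ∧ IsUniformModule R M) ∨
    (1 < α ∧ ∀ N : Submodule R M, N ≠ ⊥ → ¬ Nonempty (N ≃ₗ[R] M) →
      ∃ β, ∃ _ : β < α, ModuleZeta R β N)
termination_by α

/-- A module has couniserial dimension iff it lies in `ζ_α` for some ordinal `α`. -/
def HasCUDim (R : Type u) [Ring R] (M : Type v) [AddCommGroup M] [Module R M] : Prop :=
  ∃ α : Ordinal.{v}, ModuleZeta R α M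

open Classical in
/-- The couniserial dimension of a module: the least `α` with `M ∈ ζ_α`, with the
convention that the zero module has couniserial dimension `0`. -/
noncomputable def cuDim (R : Type u) [Ring R] (M : Type v) [AddCommGroup M] [Module R M] :
    Ordinal.{v} :=
  if Subsingleton M then 0 else sInf {α | ModuleZeta R α M}

/-- A submodule is *essential* if it meets every nonzero submodule nontrivially. -/
def IsEssentialSubmodule (R : Type u) [Ring R] {M : Type v} [AddCommGroup M] [Module R M]
    (N : Submodule R M) : Prop :=
  ∀ K : Submodule R M, K ≠ ⊥ → N ⊓ K ≠ ⊥

/-- A module is *indecomposable* if it is nonzero and is not an (internal) direct sum of two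
nonzero submodules. -/
def IsIndecomposableModule (R : Type u) [Ring R] (M : Type v) [AddCommGroup M]
    [Module R M] : Prop :=
  Nontrivial M ∧ ∀ A B : Submodule R M, IsCompl A B → A = ⊥ ∨ B = ⊥

/-- A module is *coHopfian* if it is not isomorphic to a proper submodule of itself. -/
def IsCoHopfianModule (R : Type u) [Ring R] (M : Type v) [AddCommGroup M] [Module R M] : Prop :=
  ∀ N : Submodule R M, Nonempty (M ≃ₗ[R] N) → N = ⊤

/-- A module is *fully coHopfian* if every submodule is coHopfian. -/
def IsFullyCoHopfianModule (R : Type u) [Ring R] (M : Type v) [AddCommGroup M]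
    [Module R M] : Prop :=
  ∀ N : Submodule R M, IsCoHopfianModule R N

/-- A module `N` has the *cancellation property* if `N ⊕ A ≅ N ⊕ B` implies `A ≅ B`. -/
def HasCancellation (R : Type u) [Ring R] (N : Type v) [AddCommGroup N] [Module R N] : Prop :=
  ∀ (A B : Type v) [AddCommGroup A] [Module R A] [AddCommGroup B] [Module R B],
    Nonempty ((N × A) ≃ₗ[R] (N × B)) → Nonempty (A ≃ₗ[R] B)

/-- A module is *Dedekind finite* if it is not isomorphic to a proper direct summand of
itself. -/
def IsDedekindFiniteModule (R : Type u) [Ring R] (M : Type v) [AddCommGroup M]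
    [Module R M] : Prop :=
  ∀ A B : Submodule R M, IsCompl A B → Nonempty (M ≃ₗ[R] A) → B = ⊥

/-- A ring is *semiprime* if it has no nonzero nilpotent two-sided ideal; equivalently,
`a R a = 0` implies `a = 0`. -/
def IsSemiprimeRing (R : Type u) [Ring R] : Prop :=
  ∀ a : R, (∀ x : R, a * x * a = 0) → a = 0

/-- An ideal is an *annihilator ideal* if it is the annihilator of a subset of the ring. -/
def IsAnnihilatorIdeal (R : Type u) [Ring R] (I : Ideal R) : Prop :=
  ∃ S : Set R, (I : Set R) = {x : R | ∀ s ∈ S, x * s = 0}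

/-- A module has *uniform dimension `n`* if it contains `n` independent uniform submodules
whose direct sum is essential. -/
def HasFiniteUniformDim (R : Type u) [Ring R] (M : Type v) [AddCommGroup M] [Module R M]
    (n : ℕ) : Prop :=
  ∃ U : Fin n → Submodule R M, iSupIndep U ∧ (∀ i, IsUniformModule R (U i)) ∧
    IsEssentialSubmodule R (⨆ i, U i)

/-- A ring is *Goldie* if it has the ascending chain condition on annihilator ideals and
finite uniform dimension as a module over itself. -/
def IsGoldieRing (R : Type u) [Ring R] : Prop :=
  (∀ f : ℕ → Ideal R, (∀ n, IsAnnihilatorIdeal R (f n)) → Monotone f →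
      ∃ n, ∀ k, n ≤ k → f k = f n) ∧
    ∃ n : ℕ, HasFiniteUniformDim R R n

namespace CUAux

open Submodule

variable {R : Type u} [Ring R]

section Basics
variable {X Y : Type v} [AddCommGroup X] [Module R X] [AddCommGroup Y] [Module R Y]

theorem moduleZeta_iff (α : Ordinal.{v}) :
    ModuleZeta R α X ↔ ((α = 1 ∧ IsUniformModule R X) ∨
    (1 < α ∧ ∀ N : Submodule R X, N ≠ ⊥ → ¬ Nonempty (N ≃ₗ[R] X) →
      ∃ β, ∃ _ : β < α, ModuleZeta R β N)) := by rw [ModuleZeta]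

theorem not_moduleZeta_zero : ¬ ModuleZeta R 0 X := by
  rw [moduleZeta_iff]
  rintro (⟨h, -⟩ | ⟨h, -⟩)
  · exact zero_ne_one h
  · exact absurd h (by simp)

theorem map_ne_bot_of_ne_bot {f : X →ₗ[R] Y} (hf : Function.Injective f) {N : Submodule R X}
    (h : N ≠ ⊥) : N.map f ≠ ⊥ := by
  obtain ⟨x, hx, hx0⟩ := (Submodule.ne_bot_iff N).1 h
  exact (Submodule.ne_bot_iff _).2 ⟨f x, Submodule.mem_map_of_mem hx, fun h0 => hx0 (hf (by simpa using h0))⟩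

theorem comap_subtype_ne_bot {P N : Submodule R X} (hNP : N ≤ P) (h : N ≠ ⊥) :
    N.comap P.subtype ≠ ⊥ := by
  obtain ⟨x, hx, hx0⟩ := (Submodule.ne_bot_iff N).1 h
  refine (Submodule.ne_bot_iff _).2 ⟨⟨x, hNP hx⟩, hx, fun h0 => hx0 (by simpa using congrArg Subtype.val h0)⟩

theorem isUniformModule_congr (e : X ≃ₗ[R] Y) (h : IsUniformModule R X) : IsUniformModule R Y := by
  obtain ⟨h1, h2⟩ := h
  set f : Y →ₗ[R] X := e.symm.toLinearMap with hf_def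
  have hf : Function.Injective f := e.symm.injective
  refine ⟨e.toEquiv.symm.nontrivial, fun N₁ N₂ hN1 hN2 hN => ?_⟩
  have := h2 _ _ (map_ne_bot_of_ne_bot hf hN1) (map_ne_bot_of_ne_bot hf hN2)
  rw [← Submodule.map_inf f hf, hN, Submodule.map_bot] at this
  exact this rfl

theorem isIndecomposable_congr (e : X ≃ₗ[R] Y) (h : IsIndecomposableModule R X) :
    IsIndecomposableModule R Y := by
  obtain ⟨h1, h2⟩ := h
  set f : Y →ₗ[R] X := e.symm.toLinearMap with hf_def
  have hf : Function.Injective f := e.symm.injective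
  refine ⟨e.toEquiv.symm.nontrivial, fun A B hc => ?_⟩
  have hc' : IsCompl (A.map f) (B.map f) := by
    constructor
    · rw [disjoint_iff, ← Submodule.map_inf f hf, disjoint_iff.1 hc.disjoint, Submodule.map_bot]
    · rw [codisjoint_iff, ← Submodule.map_sup, codisjoint_iff.1 hc.codisjoint, Submodule.map_top]
      exact LinearMap.range_eq_top.2 e.symm.surjective
  have hmapinj := Submodule.map_injective_of_injective hf
  rcases h2 _ _ hc' with h | h
  · exact Or.inl (hmapinj (by rw [h, Submodule.map_bot]))
  · exact Or.inr (hmapinj (by rw [h, Submodule.map_bot]))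

theorem isIndecomposable_of_uniform (h : IsUniformModule R X) : IsIndecomposableModule R X := by
  refine ⟨h.1, fun A B hc => ?_⟩
  by_contra hab
  push_neg at hab
  exact h.2 A B hab.1 hab.2 (disjoint_iff.1 hc.disjoint)

end Basics

section Zeta
variable {X Y : Type v} [AddCommGroup X] [Module R X] [AddCommGroup Y] [Module R Y]

theorem moduleZeta_congr : ∀ (α : Ordinal.{v}) {X Y : Type v} [AddCommGroup X] [Module R X]
    [AddCommGroup Y] [Module R Y], (X ≃ₗ[R] Y) → ModuleZeta R α X → ModuleZeta R α Y := by
  intro α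
  induction α using Ordinal.induction with
  | _ α IH =>
  intro X Y _ _ _ _ e h
  rw [moduleZeta_iff] at h ⊢
  rcases h with ⟨rfl, hu⟩ | ⟨hα, hall⟩
  · exact Or.inl ⟨rfl, isUniformModule_congr e hu⟩
  · refine Or.inr ⟨hα, fun N hN hNi => ?_⟩
    have eNP := e.symm.submoduleMap N
    have hPb : N.map e.symm.toLinearMap ≠ ⊥ := map_ne_bot_of_ne_bot e.symm.injective hN
    have hPi : ¬ Nonempty ((N.map e.symm.toLinearMap) ≃ₗ[R] X) := fun ⟨g⟩ =>
      hNi ⟨((eNP.trans g).trans e)⟩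
    obtain ⟨β, hβ, hζ⟩ := hall _ hPb hPi
    exact ⟨β, hβ, IH β hβ eNP.symm hζ⟩

theorem moduleZeta_submodule {α : Ordinal.{v}} (h : ModuleZeta R α X) (N : Submodule R X)
    (hN : N ≠ ⊥) : ∃ β ≤ α, ModuleZeta R β ↥N := by
  rw [moduleZeta_iff] at h
  rcases h with ⟨rfl, hu⟩ | ⟨hα, hall⟩
  · refine ⟨1, le_rfl, ?_⟩
    rw [moduleZeta_iff]
    refine Or.inl ⟨rfl, (Submodule.nontrivial_iff_ne_bot).2 hN, fun A B hA hB hAB => ?_⟩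
    have : (A.map N.subtype) ⊓ (B.map N.subtype) ≠ ⊥ :=
      hu.2 _ _ (map_ne_bot_of_ne_bot N.injective_subtype hA)
        (map_ne_bot_of_ne_bot N.injective_subtype hB)
    rw [← Submodule.map_inf _ N.injective_subtype, hAB, Submodule.map_bot] at this
    exact this rfl
  · by_cases hi : Nonempty (↥N ≃ₗ[R] X)
    · exact ⟨α, le_rfl, moduleZeta_congr α hi.some.symm ((moduleZeta_iff α).2 (Or.inr ⟨hα, hall⟩))⟩
    · obtain ⟨β, hβ, hζ⟩ := hall N hN hi
      exact ⟨β, le_of_lt hβ, hζ⟩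

noncomputable def mcu (R : Type u) [Ring R] (X : Type v) [AddCommGroup X] [Module R X] :
    Ordinal.{v} := sInf {α | ModuleZeta R α X}

theorem mcu_mem {α : Ordinal.{v}} (h : ModuleZeta R α X) : ModuleZeta R (mcu R X) X := by
  have : sInf {β : Ordinal.{v} | ModuleZeta R β X} ∈ {β : Ordinal.{v} | ModuleZeta R β X} :=
    csInf_mem ⟨α, h⟩
  exact this

theorem mcu_le {α : Ordinal.{v}} (h : ModuleZeta R α X) : mcu R X ≤ α :=
  csInf_le' (show α ∈ {β : Ordinal.{v} | ModuleZeta R β X} from h)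

theorem one_lt_mcu {α : Ordinal.{v}} (hζ : ModuleZeta R α X) {A B : Submodule R X} (hA : A ≠ ⊥)
    (hB : B ≠ ⊥) (hd : Disjoint A B) : 1 < mcu R X := by
  have hm := mcu_mem hζ
  rcases lt_or_ge 1 (mcu R X) with h | h
  · exact h
  exfalso
  rcases lt_or_eq_of_le h with h1 | h1
  · rw [Ordinal.lt_one_iff_zero] at h1
    rw [h1] at hm
    exact not_moduleZeta_zero hm
  · rw [h1] at hm
    rw [moduleZeta_iff] at hm
    rcases hm with ⟨-, hu⟩ | ⟨hlt, -⟩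
    · exact hu.2 A B hA hB (disjoint_iff.1 hd)
    · exact (lt_irrefl _ hlt)

end Zeta

section DSup
variable {X Y : Type v} [AddCommGroup X] [Module R X] [AddCommGroup Y] [Module R Y]

def DSup (V : ℕ → Submodule R X) : ℕ → Submodule R X
  | 0 => ⊥
  | (j+1) => DSup V j ⊔ V j

theorem DSup_succ (V : ℕ → Submodule R X) (j : ℕ) : DSup V (j+1) = DSup V j ⊔ V j := rfl

theorem DSup_monotone (V : ℕ → Submodule R X) : Monotone (DSup V) :=
  monotone_nat_of_le_succ fun j => le_sup_left (b := V j)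

theorem le_DSup (V : ℕ → Submodule R X) {i j : ℕ} (h : i < j) : V i ≤ DSup V j :=
  le_trans (le_sup_right (a := DSup V i)) (DSup_monotone V h)

theorem DSup_le (V : ℕ → Submodule R X) {j : ℕ} {p : Submodule R X} (h : ∀ i < j, V i ≤ p) :
    DSup V j ≤ p := by
  induction j with
  | zero => exact bot_le
  | succ j IH =>
    exact sup_le (IH fun i hi => h i (Nat.lt_succ_of_lt hi)) (h j (Nat.lt_succ_self j))

theorem DSup_map (f : X →ₗ[R] Y) (V : ℕ → Submodule R X) (j : ℕ) :
    DSup (fun i => (V i).map f) j = (DSup V j).map f := by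
  induction j with
  | zero => simp [DSup, Submodule.map_bot]
  | succ j IH => rw [DSup_succ, DSup_succ, IH, Submodule.map_sup]

theorem DSup_le_DSup {V W : ℕ → Submodule R X} (h : ∀ i, V i ≤ W i) (j : ℕ) :
    DSup V j ≤ DSup W j := by
  induction j with
  | zero => exact le_rfl
  | succ j IH => exact sup_le (le_trans IH le_sup_left) (le_trans (h j) le_sup_right)

end DSup

section AmbUniform
variable {X Y : Type v} [AddCommGroup X] [Module R X] [AddCommGroup Y] [Module R Y]

def AmbUniform (R : Type u) [Ring R] {X : Type v} [AddCommGroup X] [Module R X]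
    (U : Submodule R X) : Prop :=
  U ≠ ⊥ ∧ ∀ A B : Submodule R X, A ≤ U → B ≤ U → A ≠ ⊥ → B ≠ ⊥ → A ⊓ B ≠ ⊥

theorem ambUniform_iff {U : Submodule R X} :
    AmbUniform R U ↔ (U ≠ ⊥ ∧ IsUniformModule R ↥U) := by
  constructor
  · rintro ⟨hne, h⟩
    refine ⟨hne, (Submodule.nontrivial_iff_ne_bot).2 hne, fun A B hA hB hAB => ?_⟩
    have := h (A.map U.subtype) (B.map U.subtype) (Submodule.map_subtype_le U A)
      (Submodule.map_subtype_le U B) (map_ne_bot_of_ne_bot U.injective_subtype hA)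
      (map_ne_bot_of_ne_bot U.injective_subtype hB)
    rw [← Submodule.map_inf U.subtype U.injective_subtype, hAB, Submodule.map_bot] at this
    exact this rfl
  · rintro ⟨hne, hnt, h⟩
    refine ⟨hne, fun A B hAU hBU hA hB hAB => ?_⟩
    have hA' : A.comap U.subtype ≠ ⊥ := comap_subtype_ne_bot hAU hA
    have hB' : B.comap U.subtype ≠ ⊥ := comap_subtype_ne_bot hBU hB
    have := h _ _ hA' hB'
    rw [← Submodule.comap_inf, hAB] at this
    apply this
    rw [eq_bot_iff]
    intro x hx
    have : (x : X) ∈ (⊥ : Submodule R X) := hx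
    simpa using Subtype.ext (by simpa using this)

theorem ambUniform_congr_map {f : X →ₗ[R] Y} (hf : Function.Injective f) {U : Submodule R X}
    (h : AmbUniform R U) : AmbUniform R (U.map f) := by
  rw [ambUniform_iff] at h ⊢
  exact ⟨map_ne_bot_of_ne_bot hf h.1,
    isUniformModule_congr (Submodule.equivMapOfInjective f hf U) h.2⟩

theorem ambUniform_map_of_disjoint {f : X →ₗ[R] Y} {U : Submodule R X}
    (hker : Disjoint U (LinearMap.ker f)) (h : AmbUniform R U) : AmbUniform R (U.map f) := by
  rw [ambUniform_iff] at h ⊢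
  set g : ↥U →ₗ[R] Y := f ∘ₗ U.subtype with hg_def
  have hginj : Function.Injective g := by
    rw [← LinearMap.ker_eq_bot]
    rw [eq_bot_iff]
    intro x hx
    have hx' : f (x : X) = 0 := hx
    have : (x : X) = 0 := (Submodule.disjoint_def.1 hker) _ x.2 (LinearMap.mem_ker.2 hx')
    simpa using Subtype.ext this
  have hrange : LinearMap.range g = U.map f := by
    rw [hg_def, LinearMap.range_comp, Submodule.range_subtype]
  have hUne : U.map f ≠ ⊥ := by
    obtain ⟨x, hx, hx0⟩ := (Submodule.ne_bot_iff U).1 h.1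
    refine (Submodule.ne_bot_iff _).2 ⟨f x, Submodule.mem_map_of_mem hx, fun h0 => hx0 ?_⟩
    exact (Submodule.disjoint_def.1 hker) _ hx (LinearMap.mem_ker.2 h0)
  refine ⟨hUne, ?_⟩
  have e1 : ↥U ≃ₗ[R] ↥(LinearMap.range g) := LinearEquiv.ofInjective g hginj
  have e2 : ↥(LinearMap.range g) ≃ₗ[R] ↥(U.map f) := LinearEquiv.ofEq _ _ hrange
  exact isUniformModule_congr (e1.trans e2) h.2

end AmbUniform

section Goldie
variable {X Y : Type v} [AddCommGroup X] [Module R X] [AddCommGroup Y] [Module R Y]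

theorem finsetSup_map {ι : Type w} [DecidableEq ι] (f : X →ₗ[R] Y) (s : Finset ι) (U : ι → Submodule R X) :
    s.sup (fun i => (U i).map f) = (s.sup U).map f := by
  induction s using Finset.induction with
  | empty => simp [Submodule.map_bot]
  | insert _ _ h IH => rw [Finset.sup_insert, Finset.sup_insert, IH, Submodule.map_sup]

/-- Elementwise essentiality of an independent sum of "ambient uniform" submodules. -/
theorem ess_finset {ι : Type w} [DecidableEq ι] (s : Finset ι) (U A : ι → Submodule R X)
    (hU : ∀ i ∈ s, AmbUniform R (U i))
    (hind : ∀ i ∈ s, Disjoint (U i) ((s.erase i).sup U))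
    (hA : ∀ i ∈ s, A i ≤ U i ∧ A i ≠ ⊥) :
    ∀ z ∈ s.sup U, z ≠ 0 → ∃ r : R, r • z ∈ s.sup A ∧ r • z ≠ 0 := by
  induction s using Finset.induction with
  | empty =>
    intro z hz hz0
    exact absurd (by simpa using hz) hz0
  | @insert i s hi IH =>
    intro z hz hz0
    rw [Finset.sup_insert] at hz
    rcases Submodule.mem_sup.1 hz with ⟨u, hu, t, ht, rfl⟩
    have hUi := hU i (Finset.mem_insert_self i s)
    have hAi := hA i (Finset.mem_insert_self i s)
    have hindi : Disjoint (U i) (s.sup U) := by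
      have := hind i (Finset.mem_insert_self i s)
      rwa [Finset.erase_insert hi] at this
    have key : ∀ w : X, w ∈ U i → w ≠ 0 → ∃ y : X, y ∈ A i ∧ y ≠ 0 ∧ ∃ q : R, y = q • w := by
      intro w hw hw0
      have hspan : Submodule.span R {w} ≤ U i := by
        rw [Submodule.span_le]; simpa using hw
      have hsne : Submodule.span R {w} ≠ ⊥ := by
        simpa [Submodule.span_singleton_eq_bot] using hw0
      have hinf := hUi.2 _ _ hspan hAi.1 hsne hAi.2
      obtain ⟨y, hy, hy0⟩ := (Submodule.ne_bot_iff _).1 hinf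
      obtain ⟨q, hq⟩ := Submodule.mem_span_singleton.1 hy.1
      exact ⟨y, hy.2, hy0, q, hq.symm⟩
    by_cases ht0 : t = 0
    · subst ht0
      rw [add_zero] at hz0 ⊢
      obtain ⟨y, hyA, hy0, q, rfl⟩ := key u hu hz0
      exact ⟨q, (Finset.le_sup (f := A) (Finset.mem_insert_self i s)) hyA, hy0⟩
    · have IH' := IH (fun j hj => hU j (Finset.mem_insert_of_mem hj))
        (fun j hj => by
          have := hind j (Finset.mem_insert_of_mem hj)
          refine this.mono_right (Finset.sup_mono ?_)
          intro a ha
          rw [Finset.mem_erase] at ha ⊢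
          exact ⟨ha.1, Finset.mem_insert_of_mem ha.2⟩)
        (fun j hj => hA j (Finset.mem_insert_of_mem hj))
      obtain ⟨r, hrt, hrt0⟩ := IH' t ht ht0
      by_cases hru : r • u = 0
      · refine ⟨r, ?_, ?_⟩
        · rw [smul_add, hru, zero_add]
          exact (Finset.sup_mono (f := A) (Finset.subset_insert i s)) hrt
        · rw [smul_add, hru, zero_add]; exact hrt0
      · obtain ⟨y, hyA, hy0, q, hq⟩ := key (r • u) (Submodule.smul_mem _ r hu) hru
        refine ⟨q * r, ?_, ?_⟩
        · rw [mul_smul, smul_add, smul_add, ← hq]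
          exact Submodule.add_mem _
            ((Finset.le_sup (f := A) (Finset.mem_insert_self i s)) hyA)
            ((Finset.sup_mono (f := A) (Finset.subset_insert i s))
              (Submodule.smul_mem _ q hrt))
        · rw [mul_smul, smul_add, smul_add, ← hq]
          intro h0
          have hAleU : s.sup A ≤ s.sup U :=
            Finset.sup_mono_fun (fun j hj => (hA j (Finset.mem_insert_of_mem hj)).1)
          have hyU : y ∈ s.sup U := by
            have hy_eq : y = -(q • (r • t)) := by
              have := congrArg (fun w => w - q • (r • t)) h0
              simpa using this
            rw [hy_eq]
            exact Submodule.neg_mem _ (hAleU (Submodule.smul_mem _ q hrt))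
          have : y = 0 := (Submodule.disjoint_def.1 hindi) y (hAi.1 hyA) hyU
          exact hy0 this

theorem goldie : ∀ (k : ℕ) {X : Type v} [AddCommGroup X] [Module R X] {ι : Type w}
    [DecidableEq ι] (s : Finset ι) (U : ι → Submodule R X), s.card = k →
    (∀ i ∈ s, AmbUniform R (U i)) →
    (∀ i ∈ s, Disjoint (U i) ((s.erase i).sup U)) →
    ∀ V : ℕ → Submodule R X, (∀ j, j ≤ k → V j ≠ ⊥) → (∀ j, j ≤ k → V j ≤ s.sup U) →
    (∀ j, j ≤ k → Disjoint (DSup V j) (V j)) → False := by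
  intro k
  induction k with
  | zero =>
    intro X _ _ ι _ s U hcard hU hind V hVne hVle hVch
    rw [Finset.card_eq_zero] at hcard
    subst hcard
    exact hVne 0 le_rfl (le_bot_iff.1 (by simpa using hVle 0 le_rfl))
  | succ k IHk =>
    intro X _ _ ι _ s U hcard hU hind V hVne hVle hVch
    set W := DSup V (k+1) with hW_def
    by_cases hcase : ∃ i ∈ s, Disjoint W (U i)
    · obtain ⟨i, his, hWUi⟩ := hcase
      set q := (U i).mkQ with hq_def
      set s' := s.erase i with hs'_def
      have hcard' : s'.card = k := by
        rw [hs'_def, Finset.card_erase_of_mem his, hcard]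
        omega
      have hUlUi : ∀ l ∈ s', Disjoint (U l) (U i) := by
        intro l hl
        have hls : l ∈ s := Finset.mem_of_mem_erase hl
        have hli : i ∈ s.erase l :=
          Finset.mem_erase.2 ⟨fun h => (Finset.ne_of_mem_erase hl) h.symm, his⟩
        exact (hind l hls).mono_right (Finset.le_sup (f := U) hli)
      have hkerq : LinearMap.ker q = U i := Submodule.ker_mkQ (U i)
      have hU' : ∀ l ∈ s', AmbUniform R ((U l).map q) := by
        intro l hl
        refine ambUniform_map_of_disjoint ?_ (hU l (Finset.mem_of_mem_erase hl))
        rw [hkerq]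
        exact hUlUi l hl
      have hmapUi : (U i).map q = ⊥ := by
        rw [eq_bot_iff]
        rintro x ⟨y, hy, rfl⟩
        rw [Submodule.mem_bot, hq_def, Submodule.mkQ_apply, Submodule.Quotient.mk_eq_zero]
        exact hy
      have hind' : ∀ l ∈ s', Disjoint ((U l).map q) ((s'.erase l).sup (fun m => (U m).map q)) := by
        intro l hl
        have hls : l ∈ s := Finset.mem_of_mem_erase hl
        have hli : i ∈ s.erase l :=
          Finset.mem_erase.2 ⟨fun h => (Finset.ne_of_mem_erase hl) h.symm, his⟩
        rw [Submodule.disjoint_def]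
        intro x hx1 hx2
        rw [finsetSup_map] at hx2
        obtain ⟨u, hu, rfl⟩ := hx1
        obtain ⟨w, hw, hqw⟩ := hx2
        have hsub : u - w ∈ U i := by
          rw [← hkerq, LinearMap.mem_ker, map_sub, hqw, sub_self]
        have hu_mem : u ∈ (s.erase l).sup U := by
          have h1 : (s'.erase l).sup U ≤ (s.erase l).sup U := by
            refine Finset.sup_mono ?_
            intro a ha
            rw [Finset.mem_erase] at ha ⊢
            exact ⟨ha.1, Finset.mem_of_mem_erase ha.2⟩
          have h2 : U i ≤ (s.erase l).sup U := Finset.le_sup (f := U) hli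
          have heq : u = (u - w) + w := by abel
          rw [heq]
          exact Submodule.add_mem _ (h2 hsub) (h1 hw)
        have : u = 0 := Submodule.disjoint_def.1 (hind l hls) u hu hu_mem
        rw [this, map_zero]
      set V' := fun j => (V j).map q with hV'_def
      have hVleW : ∀ j, j ≤ k → V j ≤ W := fun j hj => le_DSup V (Nat.lt_succ_of_le hj)
      have hVne' : ∀ j, j ≤ k → V' j ≠ ⊥ := by
        intro j hj
        obtain ⟨x, hx, hx0⟩ := (Submodule.ne_bot_iff _).1 (hVne j (le_trans hj (Nat.le_succ k)))
        refine (Submodule.ne_bot_iff _).2 ⟨q x, Submodule.mem_map_of_mem hx, fun h0 => hx0 ?_⟩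
        have hxk : x ∈ U i := by
          rw [← hkerq]
          exact LinearMap.mem_ker.2 h0
        exact Submodule.disjoint_def.1 hWUi x ((hVleW j hj) hx) hxk
      have hVle' : ∀ j, j ≤ k → V' j ≤ s'.sup (fun m => (U m).map q) := by
        intro j hj
        rw [finsetSup_map]
        have h1 : V j ≤ s.sup U := hVle j (le_trans hj (Nat.le_succ k))
        have h2 : (s.sup U).map q = (s'.sup U).map q := by
          have hins : s = insert i s' := (Finset.insert_erase his).symm
          rw [hins, Finset.sup_insert, Submodule.map_sup, hmapUi, bot_sup_eq]
        exact le_trans (Submodule.map_mono h1) (le_of_eq h2)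
      have hVch' : ∀ j, j ≤ k → Disjoint (DSup V' j) (V' j) := by
        intro j hj
        rw [hV'_def, Submodule.disjoint_def]
        intro x hx1 hx2
        rw [DSup_map] at hx1
        obtain ⟨d, hd, rfl⟩ := hx1
        obtain ⟨v, hv, hqv⟩ := hx2
        have hsub : d - v ∈ U i := by
          rw [← hkerq, LinearMap.mem_ker, map_sub, hqv, sub_self]
        have hdW : d ∈ W := (le_trans (DSup_monotone V (le_trans hj (Nat.le_succ k))) le_rfl) hd
        have hvW : v ∈ W := hVleW j hj hv
        have hdv : d - v ∈ W := Submodule.sub_mem _ hdW hvW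
        have : d - v = 0 := Submodule.disjoint_def.1 hWUi _ hdv hsub
        have hdveq : d = v := by
          have := congrArg (fun w => w + v) this
          simpa using this
        subst hdveq
        have : d = 0 := Submodule.disjoint_def.1 (hVch j (le_trans hj (Nat.le_succ k))) d hd hv
        rw [this, map_zero]
      exact IHk s' (fun m => (U m).map q) hcard' hU' hind' V' hVne' hVle' hVch'
    · push_neg at hcase
      set A := fun i => W ⊓ U i with hA_def
      have hAprop : ∀ i ∈ s, A i ≤ U i ∧ A i ≠ ⊥ :=
        fun i hi => ⟨inf_le_right, fun h => hcase i hi (disjoint_iff.2 h)⟩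
      obtain ⟨z, hzV, hz0⟩ := (Submodule.ne_bot_iff _).1 (hVne (k+1) le_rfl)
      obtain ⟨r, hrz, hrz0⟩ := ess_finset s U A hU hind hAprop z (hVle (k+1) le_rfl hzV) hz0
      have h1 : r • z ∈ W := (Finset.sup_le (fun i _ => inf_le_left (b := U i))) hrz
      have h2 : r • z ∈ V (k+1) := Submodule.smul_mem _ r hzV
      exact hrz0 (Submodule.disjoint_def.1 (hVch (k+1) le_rfl) _ h1 h2)

end Goldie

section Zorn
variable {X : Type v} [AddCommGroup X] [Module R X]

/-- Independence of a set of submodules, in "finite character" form. -/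
def FinIndep (S : Set (Submodule R X)) : Prop :=
  ∀ U ∈ S, ∀ t : Finset (Submodule R X), ↑t ⊆ S → U ∉ t → Disjoint U (t.sup id)

theorem finIndep_disjoint_sSup {S : Set (Submodule R X)} (hS : FinIndep S) {U : Submodule R X}
    (hU : U ∈ S) : Disjoint U (sSup (S \ {U})) := by
  rw [Submodule.disjoint_def]
  intro x hxU hxS
  rcases Submodule.mem_sSup_iff_exists_finset.1 hxS with ⟨t, htS, hxt⟩
  have hxt' : x ∈ t.sup id := by
    rw [Finset.sup_eq_iSup]
    exact hxt
  have hUt : U ∉ t := fun hUt => ((htS hUt).2 : U ∉ ({U} : Set _)) rfl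
  exact Submodule.disjoint_def.1 (hS U hU t (htS.trans Set.diff_subset) hUt) x hxU hxt'

theorem finset_subset_chain_union {α : Type w} [DecidableEq α] {c : Set (Set α)}
    (hc : IsChain (· ⊆ ·) c) (hne : c.Nonempty) (t : Finset α) (h : ↑t ⊆ ⋃₀ c) :
    ∃ S ∈ c, ↑t ⊆ S := by
  induction t using Finset.induction with
  | empty => exact ⟨hne.choose, hne.choose_spec, by simp⟩
  | @insert a t ha IH =>
    obtain ⟨S₁, hS₁, hts₁⟩ := IH ((Finset.coe_subset.2 (Finset.subset_insert a t)).trans h)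
    have haU : a ∈ ⋃₀ c := h (Finset.mem_coe.2 (Finset.mem_insert_self a t))
    obtain ⟨S₂, hS₂, haS₂⟩ := Set.mem_sUnion.1 haU
    have hins : ∀ {S : Set α}, ↑t ⊆ S → a ∈ S → ↑(insert a t) ⊆ S := by
      intro S h1 h2 x hx
      rcases Finset.mem_insert.1 (Finset.mem_coe.1 hx) with rfl | hx'
      · exact h2
      · exact h1 (Finset.mem_coe.2 hx')
    rcases eq_or_ne S₁ S₂ with rfl | hne'
    · exact ⟨S₁, hS₁, hins hts₁ haS₂⟩
    · rcases hc hS₁ hS₂ hne' with hle | hle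
      · exact ⟨S₂, hS₂, hins (hts₁.trans hle) haS₂⟩
      · exact ⟨S₁, hS₁, hins hts₁ (hle haS₂)⟩

theorem exists_max_uniform
    (hexU : ∀ K : Submodule R X, K ≠ ⊥ → ∃ U, U ≤ K ∧ AmbUniform R U) :
    ∃ S : Set (Submodule R X), (∀ U ∈ S, AmbUniform R U) ∧ FinIndep S ∧
      ∀ K : Submodule R X, K ≠ ⊥ → ¬ Disjoint (sSup S) K := by
  set 𝒮 : Set (Set (Submodule R X)) := {S | (∀ U ∈ S, AmbUniform R U) ∧ FinIndep S} with h𝒮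
  classical
  obtain ⟨S, hSmax⟩ := zorn_subset 𝒮 (by
    intro c hc hchain
    refine ⟨⋃₀ c, ⟨?_, ?_⟩, fun s hs => Set.subset_sUnion_of_mem hs⟩
    · rintro U ⟨S₀, hS₀, hUS₀⟩
      exact (hc hS₀).1 U hUS₀
    · intro U hU t htc hUt
      obtain ⟨S₀, hS₀c, hS₀sub⟩ := finset_subset_chain_union hchain
        (by rcases hU with ⟨S₀, h, _⟩; exact ⟨S₀, h⟩) (insert U t)
        (by
          intro x hx
          rcases Finset.mem_insert.1 (Finset.mem_coe.1 hx) with rfl | hx'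
          · exact hU
          · exact htc (Finset.mem_coe.2 hx'))
      exact (hc hS₀c).2 U (hS₀sub (Finset.mem_coe.2 (Finset.mem_insert_self U t))) t
        (fun x hx => hS₀sub (Finset.mem_coe.2 (Finset.mem_insert_of_mem (Finset.mem_coe.1 hx))))
        hUt)
  obtain ⟨⟨hSU, hSI⟩, hmax⟩ := hSmax
  refine ⟨S, hSU, hSI, fun K hK hdisj => ?_⟩
  obtain ⟨U', hU'K, hU'amb⟩ := hexU K hK
  have hU'S : Disjoint U' (sSup S) := (hdisj.mono_right hU'K).symm
  have hU'notin : U' ∉ S := by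
    intro hmem
    have h1 : U' ≤ sSup S := le_sSup hmem
    have : U' = ⊥ := by
      rw [← le_bot_iff]
      exact fun x hx => hU'S.le_bot ⟨hx, h1 hx⟩
    exact hU'amb.1 this
  have hinsert : insert U' S ∈ 𝒮 := by
    constructor
    · rintro W hW
      rcases Set.mem_insert_iff.1 hW with rfl | hWS
      · exact hU'amb
      · exact hSU W hWS
    · intro W hW t htc hWt
      rcases Set.mem_insert_iff.1 hW with rfl | hWS
      · -- W = U'
        have htS : ↑t ⊆ S := by
          intro x hx
          rcases Set.mem_insert_iff.1 (htc hx) with rfl | h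
          · exact absurd hx hWt
          · exact h
        have h1 : t.sup id ≤ sSup S := by
          refine Finset.sup_le fun b hb => ?_
          exact le_sSup (htS hb)
        exact hU'S.mono_right h1
      · -- W ∈ S
        set t' := t.erase U' with ht'_def
        have ht'S : ↑t' ⊆ S := by
          intro x hx
          have hx' := Finset.mem_of_mem_erase (by exact_mod_cast hx)
          rcases Set.mem_insert_iff.1 (htc (by exact_mod_cast hx')) with rfl | h
          · exact absurd (by exact_mod_cast hx) (Finset.notMem_erase _ _)
          · exact h
        have hWt' : W ∉ t' := fun h => hWt (Finset.mem_of_mem_erase h)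
        have h1 : Disjoint W (t'.sup id) := hSI W hWS t' ht'S hWt'
        have h2 : t.sup id ≤ U' ⊔ t'.sup id := by
          have : t ⊆ insert U' t' := Finset.subset_insert_iff.2 le_rfl
          exact le_trans (Finset.sup_mono this) (le_of_eq (Finset.sup_insert))
        rw [Submodule.disjoint_def]
        intro x hxW hxt
        have hx2 := h2 hxt
        rcases Submodule.mem_sup.1 hx2 with ⟨u, hu, y, hy, rfl⟩
        have hWle : W ≤ sSup S := le_sSup hWS
        have hyle : y ∈ sSup S := by
          have : t'.sup id ≤ sSup S := Finset.sup_le fun b hb => le_sSup (ht'S hb)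
          exact this hy
        have hu0 : u = 0 := by
          have huS : u ∈ sSup S := by
            have : u = (u + y) - y := by abel
            rw [this]
            exact Submodule.sub_mem _ (hWle hxW) hyle
          exact Submodule.disjoint_def.1 hU'S u hu huS
        rw [hu0, zero_add] at hxW ⊢
        exact Submodule.disjoint_def.1 h1 y hxW hy
  have : insert U' S ⊆ S := hmax hinsert (Set.subset_insert U' S)
  exact hU'notin (this (Set.mem_insert U' S))

/-- disjointness of partial sups for an injective enumeration inside a `FinIndep` set -/
theorem dsup_disjoint_of_finIndep {S : Set (Submodule R X)} (hS : FinIndep S)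
    (u : ℕ → Submodule R X) (hu : ∀ i, u i ∈ S) (huinj : Function.Injective u) (j : ℕ) :
    Disjoint (DSup u j) (u j) := by
  classical
  set t : Finset (Submodule R X) := (Finset.range j).image u with ht_def
  have h1 : DSup u j ≤ t.sup id :=
    DSup_le u fun i hi => Finset.le_sup (f := id) (Finset.mem_image_of_mem u (Finset.mem_range.2 hi))
  have h2 : ↑t ⊆ S := by
    intro x hx
    obtain ⟨i, _, rfl⟩ := Finset.mem_image.1 (by exact_mod_cast hx)
    exact hu i
  have h3 : u j ∉ t := by
    intro h
    obtain ⟨i, hi, hij⟩ := Finset.mem_image.1 h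
    exact absurd (huinj hij) (Nat.ne_of_lt (Finset.mem_range.1 hi))
  exact ((hS (u j) (hu j) t h2 h3).mono_right h1).symm

end Zorn

section ExistsUniform
variable {X : Type v} [AddCommGroup X] [Module R X]

theorem exists_uniform : ∀ (α : Ordinal.{v}) (X : Type v) [AddCommGroup X] [Module R X],
    Nontrivial X → ModuleZeta R α X →
    ∃ U : Submodule R X, U ≠ ⊥ ∧ IsUniformModule R ↥U := by
  intro α
  induction α using Ordinal.induction with
  | _ α IH =>
  intro X _ _ hnt hζ
  by_cases huni : IsUniformModule R X
  · refine ⟨⊤, ?_, isUniformModule_congr Submodule.topEquiv.symm huni⟩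
    obtain ⟨x, hx⟩ := exists_ne (0 : X)
    exact (Submodule.ne_bot_iff _).2 ⟨x, trivial, hx⟩
  · rw [moduleZeta_iff] at hζ
    rcases hζ with ⟨-, hu⟩ | ⟨hα, hall⟩
    · exact absurd hu huni
    · by_cases hex : ∃ N : Submodule R X, N ≠ ⊥ ∧ ¬ Nonempty (↥N ≃ₗ[R] X)
      · obtain ⟨N, hN, hNi⟩ := hex
        obtain ⟨β, hβ, hζN⟩ := hall N hN hNi
        obtain ⟨U', hU'ne, hU'u⟩ := IH β hβ ↥N ((Submodule.nontrivial_iff_ne_bot).2 hN) hζN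
        exact ⟨U'.map N.subtype, map_ne_bot_of_ne_bot N.injective_subtype hU'ne,
          isUniformModule_congr (Submodule.equivMapOfInjective N.subtype N.injective_subtype U')
            hU'u⟩
      · push_neg at hex
        exfalso
        have h2 : ¬ ∀ N₁ N₂ : Submodule R X, N₁ ≠ ⊥ → N₂ ≠ ⊥ → N₁ ⊓ N₂ ≠ ⊥ :=
          fun h => huni ⟨hnt, h⟩
        push_neg at h2
        obtain ⟨N₁, N₂, hN1, hN2, h12⟩ := h2
        obtain ⟨e₁⟩ := hex N₁ hN1
        set ψ : X →ₗ[R] X := N₁.subtype ∘ₗ e₁.symm.toLinearMap with hψ_def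
        have hψinj : Function.Injective ψ := N₁.injective_subtype.comp e₁.symm.injective
        have hψtop : Submodule.map ψ ⊤ = N₁ := by
          rw [hψ_def, Submodule.map_comp, Submodule.map_top, LinearEquiv.range,
            Submodule.map_subtype_top]
        have hpowinj : ∀ k : ℕ, Function.Injective (ψ ^ k : X →ₗ[R] X) := by
          intro k
          induction k with
          | zero => rw [pow_zero]; exact fun a b h => h
          | succ k IHk =>
            rw [pow_succ, Module.End.mul_eq_comp]
            exact IHk.comp hψinj
        have hpowmap : ∀ (k : ℕ) (p : Submodule R X),
            Submodule.map (ψ ^ (k+1) : X →ₗ[R] X) p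
              = Submodule.map (ψ ^ k : X →ₗ[R] X) (Submodule.map ψ p) := by
          intro k p
          rw [pow_succ, Module.End.mul_eq_comp, Submodule.map_comp]
        set T : ℕ → Submodule R X := fun k => Submodule.map (ψ ^ k : X →ₗ[R] X) ⊤ with hT_def
        set Bk : ℕ → Submodule R X := fun k => Submodule.map (ψ ^ k : X →ₗ[R] X) N₂ with hB_def
        have hT0 : T 0 = ⊤ := by
          rw [hT_def]
          show Submodule.map (ψ ^ 0 : X →ₗ[R] X) ⊤ = ⊤
          rw [pow_zero, Module.End.one_eq_id, Submodule.map_id]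
        have hTsucc : ∀ k, T (k+1) = Submodule.map (ψ ^ k : X →ₗ[R] X) N₁ := by
          intro k
          rw [hT_def]
          show Submodule.map (ψ ^ (k+1) : X →ₗ[R] X) ⊤ = _
          rw [hpowmap k ⊤, hψtop]
        have hTle : ∀ k, T (k+1) ≤ T k := by
          intro k
          rw [hTsucc k]
          exact Submodule.map_mono le_top
        have hBle : ∀ k, Bk k ≤ T k := fun k => Submodule.map_mono le_top
        have hBT : ∀ k, Disjoint (Bk k) (T (k+1)) := by
          intro k
          rw [hTsucc k, disjoint_iff, hB_def,
            ← Submodule.map_inf (ψ ^ k : X →ₗ[R] X) (hpowinj k)]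
          rw [show N₂ ⊓ N₁ = ⊥ from by rw [inf_comm]; exact h12, Submodule.map_bot]
        have hinv : ∀ k, Disjoint (DSup Bk k) (T k) := by
          intro k
          induction k with
          | zero => simp [DSup]
          | succ k IHk =>
            rw [DSup_succ, Submodule.disjoint_def]
            intro x hx hxT
            rcases Submodule.mem_sup.1 hx with ⟨d, hd, b, hb, rfl⟩
            have hbT : b ∈ T k := hBle k hb
            have hxTk : d + b ∈ T k := hTle k hxT
            have hdT : d ∈ T k := by
              have : d = (d + b) - b := by abel
              rw [this]
              exact Submodule.sub_mem _ hxTk hbT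
            have hd0 : d = 0 := Submodule.disjoint_def.1 IHk d hd hdT
            rw [hd0, zero_add] at hxT ⊢
            exact Submodule.disjoint_def.1 (hBT k) b hb hxT
        set C : Submodule R X := ⨆ k, DSup Bk k with hC_def
        have hdir : Directed (· ≤ ·) (DSup Bk) := (DSup_monotone Bk).directed_le
        have hB0 : Bk 0 = N₂ := by
          rw [hB_def]
          show Submodule.map (ψ ^ 0 : X →ₗ[R] X) N₂ = N₂
          rw [pow_zero, Module.End.one_eq_id, Submodule.map_id]
        have hCne : C ≠ ⊥ := by
          obtain ⟨x, hx, hx0⟩ := (Submodule.ne_bot_iff N₂).1 hN2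
          refine (Submodule.ne_bot_iff C).2 ⟨x, ?_, hx0⟩
          have h1 : x ∈ DSup Bk 1 := by
            rw [DSup_succ]
            exact Submodule.mem_sup_right (by rw [hB0]; exact hx)
          exact (le_iSup (DSup Bk) 1) h1
        obtain ⟨eC⟩ := hex C hCne
        obtain ⟨x₀, hx₀⟩ := exists_ne (0 : X)
        have hPne : Submodule.span R {x₀} ≠ ⊥ := by
          simpa [Submodule.span_singleton_eq_bot] using hx₀
        obtain ⟨eP⟩ := hex _ hPne
        set t : R →ₗ[R] X := LinearMap.toSpanSingleton R X x₀ with ht_def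
        have htrange : LinearMap.range t = Submodule.span R {x₀} :=
          (LinearMap.span_singleton_eq_range R X x₀).symm
        set g : R →ₗ[R] ↥C :=
          eC.symm.toLinearMap ∘ₗ eP.toLinearMap ∘ₗ
            (LinearEquiv.ofEq _ _ htrange).toLinearMap ∘ₗ t.rangeRestrict with hg_def
        have hgsurj : Function.Surjective g := by
          rw [hg_def]
          exact eC.symm.surjective.comp (eP.surjective.comp
            ((LinearEquiv.ofEq _ _ htrange).surjective.comp t.surjective_rangeRestrict))
        set c : ↥C := g 1 with hc_def
        have hgen : ∀ y : ↥C, ∃ r : R, y = r • c := by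
          intro y
          obtain ⟨r, rfl⟩ := hgsurj y
          refine ⟨r, ?_⟩
          rw [hc_def, ← map_smul, smul_eq_mul, mul_one]
        have hcC : (c : X) ∈ ⨆ k, DSup Bk k := c.2
        rw [Submodule.mem_iSup_of_directed _ hdir] at hcC
        obtain ⟨K, hK⟩ := hcC
        have hCle : C ≤ DSup Bk K := by
          intro y hy
          obtain ⟨r, hr⟩ := hgen ⟨y, hy⟩
          have : y = r • (c : X) := by
            have := congrArg (Subtype.val) hr
            simpa using this
          rw [this]
          exact Submodule.smul_mem _ r hK
        have hBKne : Bk K ≠ ⊥ := map_ne_bot_of_ne_bot (hpowinj K) hN2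
        apply hBKne
        rw [eq_bot_iff]
        intro x hx
        have h1 : x ∈ DSup Bk K := hCle ((le_iSup (DSup Bk) (K+1))
          (by rw [DSup_succ]; exact Submodule.mem_sup_right hx))
        have h2 : x ∈ T K := hBle K hx
        exact (Submodule.mem_bot R).2 (Submodule.disjoint_def.1 (hinv K) x h1 h2)

theorem exists_ambUniform_le {α : Ordinal.{v}} (hζ : ModuleZeta R α X) :
    ∀ K : Submodule R X, K ≠ ⊥ → ∃ U, U ≤ K ∧ AmbUniform R U := by
  intro K hK
  obtain ⟨β, -, hζK⟩ := moduleZeta_submodule hζ K hK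
  obtain ⟨U', hU'ne, hU'u⟩ := exists_uniform β ↥K ((Submodule.nontrivial_iff_ne_bot).2 hK) hζK
  refine ⟨U'.map K.subtype, Submodule.map_subtype_le K U', ?_⟩
  rw [ambUniform_iff]
  exact ⟨map_ne_bot_of_ne_bot K.injective_subtype hU'ne,
    isUniformModule_congr (Submodule.equivMapOfInjective K.subtype K.injective_subtype U') hU'u⟩

end ExistsUniform

section Chains
variable {X : Type v} [AddCommGroup X] [Module R X]

theorem no_strictmono_bounded {n : ℕ} {g : ℕ → ℕ} (h : ∀ j, g j < g (j+1)) (hb : ∀ j, g j ≤ n) :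
    False := by
  have key : ∀ j, j ≤ g j := by
    intro j
    induction j with
    | zero => exact Nat.zero_le _
    | succ j IHj => exact Nat.succ_le_of_lt (lt_of_le_of_lt IHj (h j))
  have h1 := hb (n+1)
  have h2 := key (n+1)
  omega

theorem ord_le_nat {β : Ordinal.{v}} {n : ℕ} (h : β ≤ (n : Ordinal.{v})) :
    ∃ b : ℕ, b ≤ n ∧ β = b := by
  have : β < Ordinal.omega0.{v} := lt_of_le_of_lt h (Ordinal.nat_lt_omega0 n)
  obtain ⟨b, rfl⟩ := Ordinal.lt_omega0.1 this
  exact ⟨b, Nat.cast_le.1 h, rfl⟩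

theorem comap_subtype_disjoint {P A B : Submodule R X} (h : Disjoint A B) :
    Disjoint (A.comap P.subtype) (B.comap P.subtype) := by
  rw [Submodule.disjoint_def] at h ⊢
  intro x hxA hxB
  exact Subtype.ext (by simpa using h _ hxA hxB)

theorem comap_subtype_sup_eq_top {P A B : Submodule R X} (hA : A ≤ P) (hB : B ≤ P)
    (hAB : A ⊔ B = P) : A.comap P.subtype ⊔ B.comap P.subtype = ⊤ := by
  apply Submodule.map_injective_of_injective P.injective_subtype
  rw [Submodule.map_sup, Submodule.map_comap_subtype, Submodule.map_comap_subtype,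
    inf_eq_right.2 hA, inf_eq_right.2 hB, hAB, Submodule.map_subtype_top]

theorem mcu_chain_contra {γ : Ordinal.{v}} {n : ℕ}
    (hγn : γ ≤ (n : Ordinal.{v})) (hζ : ModuleZeta R γ X) (F G : ℕ → Submodule R X)
    (hFG : ∀ j, F j ⊔ G j = F (j+1)) (hdisj : ∀ j, Disjoint (F j) (G j))
    (hFne : ∀ j, F j ≠ ⊥) (hGne : ∀ j, G j ≠ ⊥)
    (hniso : ∀ j, ¬ Nonempty (↥(F j) ≃ₗ[R] ↥(F (j+1)))) : False := by
  have hFle : ∀ j, F j ≤ F (j+1) := fun j => (hFG j) ▸ le_sup_left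
  have hζF : ∀ j, ∃ β ≤ γ, ModuleZeta R β ↥(F j) :=
    fun j => moduleZeta_submodule hζ (F j) (hFne j)
  have hbd : ∀ j, mcu R ↥(F j) ≤ (n : Ordinal.{v}) := by
    intro j
    obtain ⟨β, hβ, h⟩ := hζF j
    exact (mcu_le h).trans (hβ.trans hγn)
  have hstrict : ∀ j, mcu R ↥(F j) < mcu R ↥(F (j+1)) := by
    intro j
    have hζZ : ModuleZeta R (mcu R ↥(F (j+1))) ↥(F (j+1)) := mcu_mem (hζF (j+1)).choose_spec.2
    set A' := (F j).comap (F (j+1)).subtype with hA'_def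
    set B' := (G j).comap (F (j+1)).subtype with hB'_def
    have hA'ne : A' ≠ ⊥ := comap_subtype_ne_bot (hFle j) (hFne j)
    have hB'ne : B' ≠ ⊥ := comap_subtype_ne_bot ((hFG j) ▸ le_sup_right) (hGne j)
    have hd' : Disjoint A' B' := comap_subtype_disjoint (hdisj j)
    have h1 : 1 < mcu R ↥(F (j+1)) := one_lt_mcu hζZ hA'ne hB'ne hd'
    have eA : ↥A' ≃ₗ[R] ↥(F j) := Submodule.comapSubtypeEquivOfLe (hFle j)
    have hA'niso : ¬ Nonempty (↥A' ≃ₗ[R] ↥(F (j+1))) := fun ⟨g⟩ => hniso j ⟨eA.symm.trans g⟩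
    rw [moduleZeta_iff] at hζZ
    rcases hζZ with ⟨h1', -⟩ | ⟨-, hall⟩
    · rw [h1'] at h1; exact absurd h1 (lt_irrefl 1)
    · obtain ⟨β, hβ, hζA'⟩ := hall A' hA'ne hA'niso
      exact lt_of_le_of_lt (mcu_le (moduleZeta_congr β eA hζA')) hβ
  have hnat : ∀ j, ∃ b : ℕ, b ≤ n ∧ mcu R ↥(F j) = (b : Ordinal.{v}) := fun j => ord_le_nat (hbd j)
  choose g hgn hgeq using hnat
  refine no_strictmono_bounded (g := g) (fun j => ?_) hgn
  have := hstrict j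
  rw [hgeq j, hgeq (j+1)] at this
  exact_mod_cast this

theorem DF_contra {S : Set (Submodule R X)}
    (hSU : ∀ U ∈ S, AmbUniform R U) (hSI : FinIndep S)
    (hSess : ∀ K : Submodule R X, K ≠ ⊥ → ¬ Disjoint (sSup S) K) (hSfin : S.Finite)
    {A B : Submodule R X} (hABd : Disjoint A B) (hBne : B ≠ ⊥) (e : ↥A ≃ₗ[R] X)
    (hexUB : ∃ U, U ≤ B ∧ AmbUniform R U) : False := by
  classical
  set s := hSfin.toFinset with hs_def
  set k := s.card with hk_def
  set f : X →ₗ[R] X := A.subtype ∘ₗ e.symm.toLinearMap with hf_def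
  have hfinj : Function.Injective f := A.injective_subtype.comp e.symm.injective
  have hfle : ∀ p : Submodule R X, p.map f ≤ A := by
    rintro p x ⟨y, hy, rfl⟩
    exact ((e.symm) y).2
  obtain ⟨UB, hUBle, hUBamb⟩ := hexUB
  set en : ℕ → Submodule R X := fun i =>
    if h : i < k then ((s.equivFin.symm ⟨i, h⟩ : ↥s) : Submodule R X) else ⊥ with hen_def
  have hen_mem : ∀ i, i < k → en i ∈ S := by
    intro i hik
    rw [hen_def]
    simp only [hik, dif_pos]
    exact hSfin.mem_toFinset.1 (s.equivFin.symm ⟨i, hik⟩).2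
  have hen_inj : ∀ i j, i < k → j < k → en i = en j → i = j := by
    intro i j hik hjk hij
    rw [hen_def] at hij
    simp only [hik, hjk, dif_pos] at hij
    have := s.equivFin.symm.injective (Subtype.ext hij)
    simpa using congrArg Fin.val this
  have hen_sup : ∀ i, i < k → en i ≤ sSup S := fun i hik => le_sSup (hen_mem i hik)
  -- ambient disjointness of partial sums of en
  have hdsup_en : ∀ j, j ≤ k → Disjoint (DSup en j) (en j) := by
    intro j hjk
    rcases lt_or_ge j k with hj | hj
    · set t : Finset (Submodule R X) := (Finset.range j).image en with ht_def
      have h1 : DSup en j ≤ t.sup id := DSup_le en fun i hi =>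
        Finset.le_sup (f := id) (Finset.mem_image_of_mem en (Finset.mem_range.2 hi))
      have h2 : ↑t ⊆ S := by
        intro x hx
        obtain ⟨i, hi, rfl⟩ := Finset.mem_image.1 (Finset.mem_coe.1 hx)
        exact hen_mem i (lt_of_lt_of_le (Finset.mem_range.1 hi) (le_of_lt hj))
      have h3 : en j ∉ t := by
        intro h
        obtain ⟨i, hi, hij⟩ := Finset.mem_image.1 h
        exact absurd (hen_inj i j (lt_of_lt_of_le (Finset.mem_range.1 hi) (le_of_lt hj)) hj hij)
          (Nat.ne_of_lt (Finset.mem_range.1 hi))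
      exact ((hSI (en j) (hen_mem j hj) t h2 h3).mono_right h1).symm
    · have : en j = ⊥ := by rw [hen_def]; simp [Nat.not_lt.2 hj]
      rw [this]
      exact disjoint_bot_right
  -- the V chain
  set E := sSup S with hE_def
  have hE_sup : s.sup id = E := by
    rw [hE_def, hs_def]
    rw [Finset.sup_id_eq_sSup, Set.Finite.coe_toFinset]
  set raw : ℕ → Submodule R X := fun j => if j < k then (en j).map f else UB with hraw_def
  set V : ℕ → Submodule R X := fun j => raw j ⊓ E with hV_def
  have hrawne : ∀ j, j ≤ k → raw j ≠ ⊥ := by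
    intro j hjk
    rw [hraw_def]
    rcases lt_or_ge j k with hj | hj
    · simp only [hj, if_pos]
      exact map_ne_bot_of_ne_bot hfinj (hSU _ (hen_mem j hj)).1
    · simp only [Nat.not_lt.2 hj, if_neg, not_false_iff]
      exact hUBamb.1
  have hVne : ∀ j, j ≤ k → V j ≠ ⊥ := by
    intro j hjk h
    refine hSess (raw j) (hrawne j hjk) (disjoint_iff.2 ?_)
    rw [inf_comm]
    exact h
  have hVle : ∀ j, j ≤ k → V j ≤ s.sup id := fun j hjk => by
    rw [hV_def, hE_sup]; exact inf_le_right
  have hraw_ch : ∀ j, j ≤ k → Disjoint (DSup raw j) (raw j) := by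
    intro j hjk
    rcases lt_or_ge j k with hj | hj
    · -- raw i = map f (en i) for i < j < k... careful i < j ≤ k means i < k ✓
      have hdsup_eq : DSup raw j ≤ (DSup en j).map f := by
        refine DSup_le raw fun i hi => ?_
        have hik : i < k := lt_of_lt_of_le hi (le_of_lt hj)
        rw [hraw_def]
        simp only [hik, if_pos]
        exact Submodule.map_mono (le_DSup en hi)
      have hrawj : raw j = (en j).map f := by rw [hraw_def]; simp [hj]
      rw [hrawj]
      refine Disjoint.mono_left hdsup_eq ?_
      rw [disjoint_iff, ← Submodule.map_inf f hfinj, disjoint_iff.1 (hdsup_en j (le_of_lt hj)),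
        Submodule.map_bot]
    · have hjeq : j = k := le_antisymm hjk hj
      subst hjeq
      have h1 : DSup raw k ≤ A := DSup_le raw fun i hi => by
        rw [hraw_def]; simp only [hi, if_pos]; exact hfle (en i)
      have h2 : raw k ≤ B := by rw [hraw_def]; simp only [lt_irrefl, if_neg, not_false_iff]; exact hUBle
      exact hABd.mono h1 h2
  have hVch : ∀ j, j ≤ k → Disjoint (DSup V j) (V j) := by
    intro j hjk
    refine Disjoint.mono ?_ inf_le_left (hraw_ch j hjk)
    exact DSup_le_DSup (fun i => inf_le_left) j
  -- goldie with U := id over s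
  refine goldie k s id rfl ?_ ?_ V hVne hVle hVch
  · intro i hi
    refine hSU i ?_
    rwa [hs_def, Set.Finite.mem_toFinset] at hi
  · intro i hi
    have hiS : i ∈ S := by rwa [hs_def, Set.Finite.mem_toFinset] at hi
    have h2 : ↑(s.erase i) ⊆ S := by
      intro x hx
      have := Finset.mem_of_mem_erase (Finset.mem_coe.1 hx)
      rwa [hs_def, Set.Finite.mem_toFinset] at this
    exact hSI i hiS (s.erase i) h2 (Finset.notMem_erase i s)

end Chains

section Claims
variable {X : Type v} [AddCommGroup X] [Module R X]

theorem ne_bot_of_le {A F : Submodule R X} (h : A ≤ F) (hA : A ≠ ⊥) : F ≠ ⊥ :=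
  fun hF => hA (le_bot_iff.1 (hF ▸ h))

theorem DSup_eq_range_sup (u : ℕ → Submodule R X) (m : ℕ) :
    DSup u m = (Finset.range m).sup u := by
  induction m with
  | zero => simp [DSup]
  | succ m IH => rw [DSup_succ, IH, Finset.range_add_one, Finset.sup_insert, sup_comm]

theorem finIndep_fam_range {S : Set (Submodule R X)} (hSI : FinIndep S) (u : ℕ → Submodule R X)
    (hu : ∀ i, u i ∈ S) (huinj : Function.Injective u) (m : ℕ) :
    ∀ i ∈ Finset.range m, Disjoint (u i) (((Finset.range m).erase i).sup u) := by
  classical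
  intro i _
  set t := ((Finset.range m).erase i).image u with ht_def
  have h1 : ((Finset.range m).erase i).sup u ≤ t.sup id :=
    Finset.sup_le fun l hl => Finset.le_sup (f := id) (Finset.mem_image_of_mem u hl)
  have h2 : ↑t ⊆ S := by
    intro x hx
    obtain ⟨l, _, rfl⟩ := Finset.mem_image.1 (Finset.mem_coe.1 hx)
    exact hu l
  have h3 : u i ∉ t := by
    intro h
    obtain ⟨l, hl, hli⟩ := Finset.mem_image.1 h
    exact absurd (huinj hli) (Finset.ne_of_mem_erase hl)
  exact (hSI (u i) (hu i) t h2 h3).mono_right h1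

/-- Goldie contradiction when the whole module is the span of finitely many uniform pieces
but contains a longer independent chain. -/
theorem goldie_top_contra {P : Submodule R X} {S : Set (Submodule R X)}
    (hSU : ∀ U ∈ S, AmbUniform R U) (hSI : FinIndep S) (u : ℕ → Submodule R X)
    (hu : ∀ i, u i ∈ S) (huinj : Function.Injective u) (m : ℕ) (hP : P = DSup u m)
    (f : ↥P ≃ₗ[R] X) : False := by
  classical
  have huamb : ∀ i, AmbUniform R (u i) := fun i => hSU (u i) (hu i)
  have hule : ∀ i, i < m → u i ≤ P := fun i hi => hP ▸ le_DSup u hi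
  set cu : ℕ → Submodule R ↥P := fun i => (u i).comap P.subtype with hcu_def
  set W : ℕ → Submodule R X := fun i => (cu i).map f.toLinearMap with hW_def
  set s := Finset.range m with hs_def
  have hUW : ∀ i ∈ s, AmbUniform R (W i) := by
    intro i hi
    have him : i < m := by rwa [hs_def, Finset.mem_range] at hi
    have h1 : AmbUniform R (cu i) := by
      rw [ambUniform_iff]
      refine ⟨comap_subtype_ne_bot (hule i him) (huamb i).1, ?_⟩
      exact isUniformModule_congr (Submodule.comapSubtypeEquivOfLe (hule i him)).symm
        ((ambUniform_iff.1 (huamb i)).2)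
    exact ambUniform_congr_map f.injective h1
  have hWind : ∀ i ∈ s, Disjoint (W i) ((s.erase i).sup W) := by
    intro i hi
    have him : i < m := by rwa [hs_def, Finset.mem_range] at hi
    have hsup_eq : (s.erase i).sup W = ((s.erase i).sup cu).map f.toLinearMap := by
      rw [hW_def]
      exact finsetSup_map f.toLinearMap (s.erase i) cu
    rw [hW_def, hsup_eq, disjoint_iff, ← Submodule.map_inf f.toLinearMap f.injective]
    have hd : Disjoint (cu i) ((s.erase i).sup cu) := by
      have hambient := finIndep_fam_range hSI u hu huinj m i hi
      rw [Submodule.disjoint_def]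
      intro x hx1 hx2
      have hx2' : (x : X) ∈ ((Finset.range m).erase i).sup u := by
        have hle : (s.erase i).sup cu ≤ (((Finset.range m).erase i).sup u).comap P.subtype := by
          refine Finset.sup_le fun l hl => ?_
          rw [hcu_def]
          refine Submodule.comap_mono ?_
          exact Finset.le_sup (f := u) hl
        exact hle hx2
      have : (x : X) = 0 := Submodule.disjoint_def.1 hambient _ hx1 hx2'
      exact Subtype.ext (by simpa using this)
    rw [disjoint_iff.1 hd, Submodule.map_bot]
  have hsupW : s.sup W = ⊤ := by
    have h1 : s.sup cu = ⊤ := by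
      apply Submodule.map_injective_of_injective P.injective_subtype
      rw [← finsetSup_map P.subtype s cu]
      have h2 : ∀ i ∈ s, (cu i).map P.subtype = u i := by
        intro i hi
        have him : i < m := by rwa [hs_def, Finset.mem_range] at hi
        rw [hcu_def, Submodule.map_comap_subtype, inf_eq_right.2 (hule i him)]
      rw [Finset.sup_congr rfl h2, Submodule.map_subtype_top, hP, DSup_eq_range_sup, hs_def]
    rw [hW_def, finsetSup_map f.toLinearMap s cu, h1, Submodule.map_top, LinearEquiv.range]
  refine goldie m s W (by rw [hs_def, Finset.card_range]) hUW hWind u ?_ ?_ ?_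
  · exact fun j _ => (huamb j).1
  · intro j _
    rw [hsupW]
    exact le_top
  · intro j _
    exact dsup_disjoint_of_finIndep hSI u hu huinj j

theorem claims : ∀ n : ℕ,
    (∀ (X' : Type v) [AddCommGroup X'] [Module R X'],
      (∃ γ ≤ (n : Ordinal.{v}), ModuleZeta R γ X') → ∀ A B : Submodule R X', Disjoint A B →
        A ⊔ B = ⊤ → B ≠ ⊥ → ¬ Nonempty (↥A ≃ₗ[R] X')) ∧
    (∀ (X' : Type v) [AddCommGroup X'] [Module R X'],
      (∃ γ ≤ (n : Ordinal.{v}), ModuleZeta R γ X') → ∀ V : ℕ → Submodule R X',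
        (∀ i, V i ≠ ⊥) → (∀ j, Disjoint (DSup V j) (V j)) → False) := by
  intro n
  induction n using Nat.strong_induction_on with
  | _ n IH =>
  have hclaim2 : ∀ (X' : Type v) [AddCommGroup X'] [Module R X'],
      (∃ γ ≤ (n : Ordinal.{v}), ModuleZeta R γ X') → ∀ A B : Submodule R X', Disjoint A B →
        A ⊔ B = ⊤ → B ≠ ⊥ → ¬ Nonempty (↥A ≃ₗ[R] X') := by
    rintro X' _ _ ⟨γ, hγn, hζ⟩ A B hABd hABs hBne ⟨e⟩
    have hXnt : Nontrivial X' := by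
      obtain ⟨x, _, hx0⟩ := (Submodule.ne_bot_iff B).1 hBne
      exact ⟨⟨x, 0, hx0⟩⟩
    have hAne : A ≠ ⊥ := by
      rintro rfl
      have hsub : Subsingleton X' := e.symm.toEquiv.subsingleton
      obtain ⟨x, y, hxy⟩ := hXnt
      exact hxy (Subsingleton.elim x y)
    obtain ⟨S, hSU, hSI, hSess⟩ := exists_max_uniform (exists_ambUniform_le hζ)
    by_cases hSfin : S.Finite
    · exact DF_contra hSU hSI hSess hSfin hABd hBne e (exists_ambUniform_le hζ B hBne)
    · have hSinf : S.Infinite := hSfin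
      set emb := Set.Infinite.natEmbedding S hSinf with hemb_def
      set u : ℕ → Submodule R X' := fun i => ((emb i : ↥S) : Submodule R X') with hu_def
      have hu : ∀ i, u i ∈ S := fun i => (emb i).2
      have huinj : Function.Injective u := fun a b h => emb.injective (Subtype.coe_injective h)
      have hu0ne : u 0 ≠ ⊥ := (hSU (u 0) (hu 0)).1
      have hdch : ∀ j, Disjoint (DSup u j) (u j) := dsup_disjoint_of_finIndep hSI u hu huinj
      by_cases hiso : ∃ j, Nonempty (↥(DSup u (j+1)) ≃ₗ[R] ↥(DSup u (j+2)))
      · obtain ⟨j, ⟨g⟩⟩ := hiso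
        set P := DSup u (j+2) with hP_def
        have hPne : P ≠ ⊥ := ne_bot_of_le (le_DSup u (Nat.succ_pos (j+1))) hu0ne
        have hDle : DSup u (j+1) ≤ P := DSup_monotone u (Nat.le_succ (j+1))
        have huj1le : u (j+1) ≤ P := le_DSup u (Nat.lt_succ_self (j+1))
        have hD1ne : DSup u (j+1) ≠ ⊥ := ne_bot_of_le (le_DSup u (Nat.succ_pos j)) hu0ne
        set A' := (DSup u (j+1)).comap P.subtype with hA'_def
        set B' := (u (j+1)).comap P.subtype with hB'_def
        have hA'B'd : Disjoint A' B' := comap_subtype_disjoint (hdch (j+1))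
        have hA'B's : A' ⊔ B' = ⊤ := comap_subtype_sup_eq_top hDle huj1le (DSup_succ u (j+1)).symm
        have hB'ne : B' ≠ ⊥ := comap_subtype_ne_bot huj1le ((hSU _ (hu (j+1))).1)
        have heA' : ↥A' ≃ₗ[R] ↥P := (Submodule.comapSubtypeEquivOfLe hDle).trans g
        by_cases hPX : Nonempty (↥P ≃ₗ[R] X')
        · obtain ⟨f⟩ := hPX
          exact goldie_top_contra hSU hSI u hu huinj (j+2) hP_def f
        · -- descend via cudim
          have hζm := mcu_mem hζ
          have h1m : 1 < mcu R X' := one_lt_mcu hζm hAne hBne hABd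
          rcases (moduleZeta_iff (mcu R X')).1 hζm with ⟨h1, -⟩ | ⟨-, hall⟩
          · rw [h1] at h1m; exact absurd h1m (lt_irrefl 1)
          obtain ⟨β, hβ, hζP⟩ := hall P hPne hPX
          have hβn : β < (n : Ordinal.{v}) := lt_of_lt_of_le hβ ((mcu_le hζ).trans hγn)
          obtain ⟨b, -, rfl⟩ := ord_le_nat (le_of_lt hβn)
          have hbn : b < n := by exact_mod_cast hβn
          exact (IH b hbn).1 ↥P ⟨b, le_rfl, hζP⟩ A' B' hA'B'd hA'B's hB'ne ⟨heA'⟩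
      · push_neg at hiso
        refine mcu_chain_contra hγn hζ (fun j => DSup u (j+1)) (fun j => u (j+1))
          (fun j => (DSup_succ u (j+1)).symm) (fun j => hdch (j+1))
          (fun j => ne_bot_of_le (le_DSup u (Nat.succ_pos j)) hu0ne)
          (fun j => (hSU _ (hu (j+1))).1) (fun j => not_nonempty_iff.2 (hiso j))
  refine ⟨hclaim2, ?_⟩
  rintro X' _ _ ⟨γ, hγn, hζ⟩ V hVne hVch
  by_cases hiso : ∃ j, Nonempty (↥(DSup V (j+1)) ≃ₗ[R] ↥(DSup V (j+2)))
  · obtain ⟨j, ⟨g⟩⟩ := hiso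
    set P := DSup V (j+2) with hP_def
    have hPne : P ≠ ⊥ := ne_bot_of_le (le_DSup V (Nat.succ_pos (j+1))) (hVne 0)
    have hDle : DSup V (j+1) ≤ P := DSup_monotone V (Nat.le_succ (j+1))
    have hVj1le : V (j+1) ≤ P := le_DSup V (Nat.lt_succ_self (j+1))
    obtain ⟨δ, hδγ, hζP⟩ := moduleZeta_submodule hζ P hPne
    refine hclaim2 ↥P ⟨δ, hδγ.trans hγn, hζP⟩ ((DSup V (j+1)).comap P.subtype)
      ((V (j+1)).comap P.subtype) (comap_subtype_disjoint (hVch (j+1)))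
      (comap_subtype_sup_eq_top hDle hVj1le (DSup_succ V (j+1)).symm)
      (comap_subtype_ne_bot hVj1le (hVne (j+1)))
      ⟨(Submodule.comapSubtypeEquivOfLe hDle).trans g⟩
  · push_neg at hiso
    exact mcu_chain_contra hγn hζ (fun j => DSup V (j+1)) (fun j => V (j+1))
      (fun j => (DSup_succ V (j+1)).symm) (fun j => hVch (j+1))
      (fun j => ne_bot_of_le (le_DSup V (Nat.succ_pos j)) (hVne 0)) (fun j => hVne (j+1)) (fun j => not_nonempty_iff.2 (hiso j))

end Claims

section Decomp
variable {X : Type v} [AddCommGroup X] [Module R X]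

def HasDecomp (R : Type u) [Ring R] (X : Type v) [AddCommGroup X] [Module R X] : Prop :=
  ∃ (ι : Type v) (_ : DecidableEq ι) (N : ι → Submodule R X),
    DirectSum.IsInternal N ∧ ∀ i, IsIndecomposableModule R (N i)

theorem hasDecomp_self (h : IsIndecomposableModule R X) : HasDecomp R X := by
  refine ⟨PUnit, inferInstance, fun _ => ⊤, ?_,
    fun _ => isIndecomposable_congr Submodule.topEquiv.symm h⟩
  rw [DirectSum.isInternal_submodule_iff_iSupIndep_and_iSup_eq_top]
  constructor
  · rw [iSupIndep_def]
    intro i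
    have hle : (⨆ j, ⨆ (_ : j ≠ i), (⊤ : Submodule R X)) ≤ ⊥ :=
      iSup_le fun j => iSup_le fun hj => absurd (Subsingleton.elim j i) hj
    rw [disjoint_iff, le_bot_iff.1 hle]
    exact inf_bot_eq _
  · exact le_antisymm le_top (le_iSup (fun _ : PUnit => (⊤ : Submodule R X)) PUnit.unit)

theorem indep_map_side {A B : Submodule R X} (hdisj : Disjoint A B) {ι : Sort w}
    (N : ι → Submodule R ↥A) {a : ι} (hind : Disjoint (N a) (⨆ j, ⨆ (_ : j ≠ a), N j))
    {T : Submodule R X} (hT : T ≤ ((⨆ j, ⨆ (_ : j ≠ a), N j)).map A.subtype ⊔ B) :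
    Disjoint ((N a).map A.subtype) T := by
  rw [Submodule.disjoint_def]
  intro x hx1 hx2
  have hx2' := hT hx2
  rcases Submodule.mem_sup.1 hx2' with ⟨t, ht, b, hb, rfl⟩
  have hxA : t + b ∈ A := Submodule.map_subtype_le A (N a) hx1
  have htA : t ∈ A := Submodule.map_subtype_le A _ ht
  have hbA : b ∈ A := by
    have hbeq : b = (t + b) - t := by abel
    rw [hbeq]
    exact Submodule.sub_mem _ hxA htA
  have hb0 : b = 0 := Submodule.disjoint_def.1 hdisj b hbA hb
  rw [hb0, add_zero] at hx1 ⊢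
  have hmem : t ∈ ((N a) ⊓ (⨆ j, ⨆ (_ : j ≠ a), N j)).map A.subtype := by
    rw [Submodule.map_inf A.subtype A.injective_subtype]
    exact ⟨hx1, ht⟩
  rw [disjoint_iff.1 hind, Submodule.map_bot] at hmem
  simpa using hmem

theorem hasDecomp_combine {A B : Submodule R X} (hc : IsCompl A B)
    (hA : HasDecomp R ↥A) (hB : HasDecomp R ↥B) : HasDecomp R X := by
  classical
  obtain ⟨ιA, _, NA, hNAint, hNAindec⟩ := hA
  obtain ⟨ιB, _, NB, hNBint, hNBindec⟩ := hB
  rw [DirectSum.isInternal_submodule_iff_iSupIndep_and_iSup_eq_top] at hNAint hNBint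
  obtain ⟨hNAind, hNAsup⟩ := hNAint
  obtain ⟨hNBind, hNBsup⟩ := hNBint
  rw [iSupIndep_def] at hNAind hNBind
  set F : ιA ⊕ ιB → Submodule R X :=
    Sum.elim (fun a => (NA a).map A.subtype) (fun b => (NB b).map B.subtype) with hF_def
  have hsupFA : (⨆ a, (NA a).map A.subtype) = A := by
    rw [← Submodule.map_iSup, hNAsup, Submodule.map_subtype_top]
  have hsupFB : (⨆ b, (NB b).map B.subtype) = B := by
    rw [← Submodule.map_iSup, hNBsup, Submodule.map_subtype_top]
  refine ⟨ιA ⊕ ιB, inferInstance, F, ?_, ?_⟩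
  · rw [DirectSum.isInternal_submodule_iff_iSupIndep_and_iSup_eq_top]
    constructor
    · rw [iSupIndep_def]
      rintro (a | b)
      · refine indep_map_side hc.disjoint NA (hNAind a) ?_
        refine iSup_le fun j => iSup_le fun hj => ?_
        rcases j with a' | b'
        · have ha' : a' ≠ a := fun h => hj (by rw [h])
          refine le_trans ?_ le_sup_left
          exact Submodule.map_mono (le_iSup₂ (f := fun j (_ : j ≠ a) => NA j) a' ha')
        · exact le_trans (le_of_eq rfl) (le_trans (Submodule.map_subtype_le B (NB b'))
            (le_trans (le_of_eq rfl) le_sup_right))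
      · refine indep_map_side hc.disjoint.symm NB (hNBind b) ?_
        refine iSup_le fun j => iSup_le fun hj => ?_
        rcases j with a' | b'
        · exact le_trans (Submodule.map_subtype_le A (NA a')) le_sup_right
        · have hb' : b' ≠ b := fun h => hj (by rw [h])
          refine le_trans ?_ le_sup_left
          exact Submodule.map_mono (le_iSup₂ (f := fun j (_ : j ≠ b) => NB j) b' hb')
    · rw [iSup_sum]
      show (⨆ a, (NA a).map A.subtype) ⊔ (⨆ b, (NB b).map B.subtype) = ⊤
      rw [hsupFA, hsupFB]
      exact hc.sup_eq_top
  · rintro (a | b)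
    · exact isIndecomposable_congr
        (Submodule.equivMapOfInjective A.subtype A.injective_subtype (NA a)) (hNAindec a)
    · exact isIndecomposable_congr
        (Submodule.equivMapOfInjective B.subtype B.injective_subtype (NB b)) (hNBindec b)

theorem hasDecomp_of_uniform_sSup {S : Set (Submodule R X)} (hSU : ∀ U ∈ S, AmbUniform R U)
    (hSI : FinIndep S) {E : Submodule R X} (hE : E = sSup S) (f : ↥E ≃ₗ[R] X) :
    HasDecomp R X := by
  classical
  have hle : ∀ U : ↥S, (U : Submodule R X) ≤ E := fun U => hE ▸ le_sSup U.2
  set cu : ↥S → Submodule R ↥E := fun U => (U : Submodule R X).comap E.subtype with hcu_def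
  set N : ↥S → Submodule R X := fun U => (cu U).map f.toLinearMap with hN_def
  have hcu_sup : (⨆ U : ↥S, cu U) = ⊤ := by
    apply Submodule.map_injective_of_injective E.injective_subtype
    rw [Submodule.map_iSup, Submodule.map_subtype_top]
    have h1 : ∀ U : ↥S, (cu U).map E.subtype = (U : Submodule R X) := by
      intro U
      rw [hcu_def, Submodule.map_comap_subtype, inf_eq_right.2 (hle U)]
    rw [iSup_congr h1, hE, sSup_eq_iSup']
  have hcu_ind : ∀ U : ↥S, Disjoint (cu U) (⨆ W, ⨆ (_ : W ≠ U), cu W) := by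
    intro U
    rw [Submodule.disjoint_def]
    intro x hx1 hx2
    have h2 : (⨆ W, ⨆ (_ : W ≠ U), cu W) ≤ (sSup (S \ {(U : Submodule R X)})).comap E.subtype := by
      refine iSup_le fun W => iSup_le fun hWU => ?_
      rw [hcu_def]
      refine Submodule.comap_mono (le_sSup ?_)
      exact ⟨W.2, fun h => hWU (Subtype.ext h)⟩
    have h3 : (x : X) ∈ sSup (S \ {(U : Submodule R X)}) := h2 hx2
    have h4 : (x : X) = 0 :=
      Submodule.disjoint_def.1 (finIndep_disjoint_sSup hSI U.2) _ hx1 h3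
    exact Subtype.ext (by simpa using h4)
  refine ⟨↥S, inferInstance, N, ?_, ?_⟩
  · rw [DirectSum.isInternal_submodule_iff_iSupIndep_and_iSup_eq_top]
    constructor
    · rw [iSupIndep_def]
      intro U
      have hmap : (⨆ W, ⨆ (_ : W ≠ U), N W) = (⨆ W, ⨆ (_ : W ≠ U), cu W).map f.toLinearMap := by
        rw [Submodule.map_iSup]
        refine iSup_congr fun W => ?_
        rw [Submodule.map_iSup]
      rw [hN_def, hmap, disjoint_iff, ← Submodule.map_inf f.toLinearMap f.injective,
        disjoint_iff.1 (hcu_ind U), Submodule.map_bot]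
    · rw [hN_def]
      have : (⨆ U : ↥S, (cu U).map f.toLinearMap) = ((⨆ U : ↥S, cu U)).map f.toLinearMap := by
        rw [Submodule.map_iSup]
      rw [this, hcu_sup, Submodule.map_top, LinearEquiv.range]
  · intro U
    have e1 : ↥(cu U) ≃ₗ[R] ↥(U : Submodule R X) := Submodule.comapSubtypeEquivOfLe (hle U)
    have e2 : ↥(cu U) ≃ₗ[R] ↥(N U) := Submodule.equivMapOfInjective f.toLinearMap f.injective _
    have huni : IsUniformModule R ↥(U : Submodule R X) := (ambUniform_iff.1 (hSU _ U.2)).2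
    exact isIndecomposable_congr (e1.symm.trans e2) (isIndecomposable_of_uniform huni)

end Decomp

section Main

theorem main_decomp : ∀ (α : Ordinal.{v}), α ≤ Ordinal.omega0.{v} →
    ∀ (X : Type v) [AddCommGroup X] [Module R X], Nontrivial X → ModuleZeta R α X →
    HasDecomp R X := by
  intro α
  induction α using Ordinal.induction with
  | _ α IH =>
  intro hαω X _ _ hnt hζ
  by_cases hindec : IsIndecomposableModule R X
  · exact hasDecomp_self hindec
  · have hne : ∃ A B : Submodule R X, IsCompl A B ∧ A ≠ ⊥ ∧ B ≠ ⊥ := by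
      have h1 : ¬ ∀ A B : Submodule R X, IsCompl A B → A = ⊥ ∨ B = ⊥ :=
        fun h => hindec ⟨hnt, h⟩
      push_neg at h1
      exact h1
    obtain ⟨A, B, hcompl, hAne, hBne⟩ := hne
    obtain ⟨S, hSU, hSI, hSess⟩ := exists_max_uniform (exists_ambUniform_le hζ)
    have hm := mcu_mem hζ
    have hmα : mcu R X ≤ α := mcu_le hζ
    have h1m : 1 < mcu R X := one_lt_mcu hζ hAne hBne hcompl.disjoint
    rcases (moduleZeta_iff (mcu R X)).1 hm with ⟨h1, -⟩ | ⟨-, hall⟩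
    · rw [h1] at h1m; exact absurd h1m (lt_irrefl 1)
    by_cases hSfin : S.Finite
    · have hAniso : ¬ Nonempty (↥A ≃ₗ[R] X) := fun ⟨e⟩ =>
        DF_contra hSU hSI hSess hSfin hcompl.disjoint hBne e (exists_ambUniform_le hζ B hBne)
      have hBniso : ¬ Nonempty (↥B ≃ₗ[R] X) := fun ⟨e⟩ =>
        DF_contra hSU hSI hSess hSfin hcompl.disjoint.symm hAne e (exists_ambUniform_le hζ A hAne)
      obtain ⟨βA, hβA, hζA⟩ := hall A hAne hAniso
      obtain ⟨βB, hβB, hζB⟩ := hall B hBne hBniso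
      have hβAα : βA < α := lt_of_lt_of_le hβA hmα
      have hβBα : βB < α := lt_of_lt_of_le hβB hmα
      exact hasDecomp_combine hcompl
        (IH βA hβAα (le_trans (le_of_lt hβAα) hαω) ↥A
          ((Submodule.nontrivial_iff_ne_bot).2 hAne) hζA)
        (IH βB hβBα (le_trans (le_of_lt hβBα) hαω) ↥B
          ((Submodule.nontrivial_iff_ne_bot).2 hBne) hζB)
    · have hSinf : S.Infinite := hSfin
      have hEne : sSup S ≠ ⊥ := by
        obtain ⟨U, hU⟩ := hSinf.nonempty
        exact ne_bot_of_le (le_sSup hU) ((hSU U hU).1)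
      by_cases hiso : Nonempty (↥(sSup S) ≃ₗ[R] X)
      · exact hasDecomp_of_uniform_sSup hSU hSI rfl hiso.some
      · obtain ⟨β, hβ, hζE⟩ := hall (sSup S) hEne hiso
        exfalso
        have hβω : β < Ordinal.omega0.{v} := lt_of_lt_of_le (lt_of_lt_of_le hβ hmα) hαω
        obtain ⟨b, rfl⟩ := Ordinal.lt_omega0.1 hβω
        set emb := Set.Infinite.natEmbedding S hSinf with hemb_def
        set u : ℕ → Submodule R X := fun i => ((emb i : ↥S) : Submodule R X) with hu_def
        have hu : ∀ i, u i ∈ S := fun i => (emb i).2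
        have huinj : Function.Injective u := fun a b h => emb.injective (Subtype.coe_injective h)
        have huleE : ∀ i, u i ≤ sSup S := fun i => le_sSup (hu i)
        set V : ℕ → Submodule R ↥(sSup S) := fun i => (u i).comap (sSup S).subtype with hV_def
        refine (claims b).2 ↥(sSup S) ⟨b, le_rfl, hζE⟩ V
          (fun i => comap_subtype_ne_bot (huleE i) ((hSU _ (hu i)).1)) ?_
        intro j
        have hdj := dsup_disjoint_of_finIndep hSI u hu huinj j
        rw [Submodule.disjoint_def]
        intro x hx1 hx2
        have hle : DSup V j ≤ (DSup u j).comap (sSup S).subtype :=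
          DSup_le V fun i hi => Submodule.comap_mono (le_DSup u hi)
        have hx0 : (x : X) = 0 :=
          Submodule.disjoint_def.1 hdj _ (Submodule.mem_comap.1 (hle hx1))
            (Submodule.mem_comap.1 hx2)
        exact Subtype.ext (by simpa using hx0)

end Main
end CUAux

/-- A nonzero module of couniserial dimension at most `ω` is a direct sum of
indecomposable submodules. -/
theorem stmt10 (R : Type u) [Ring R] (M : Type v) [AddCommGroup M] [Module R M] [Nontrivial M]
    (h : HasCUDim R M) (hω : cuDim R M ≤ Ordinal.omega0.{v}) :
    ∃ (ι : Type v) (_ : DecidableEq ι) (N : ι → Submodule R M),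
      DirectSum.IsInternal N ∧ ∀ i, IsIndecomposableModule R (N i) := by
  have hnsub : ¬ Subsingleton M := not_subsingleton M
  have hcu : cuDim R M = sInf {α | ModuleZeta R α M} := by
    rw [cuDim, if_neg hnsub]
  have hζ : ModuleZeta R (sInf {α : Ordinal.{v} | ModuleZeta R α M}) M := by
    have hmem : sInf {α : Ordinal.{v} | ModuleZeta R α M} ∈ {α : Ordinal.{v} | ModuleZeta R α M} :=
      csInf_mem h
    exact hmem
  have hle : sInf {α : Ordinal.{v} | ModuleZeta R α M} ≤ Ordinal.omega0.{v} := hcu ▸ hω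
  exact CUAux.main_decomp _ hle M inferInstance hζ
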